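/- The degree function with respect to x on the non-associative Ore extension S = 𝕆[y][x; σ, δ] (where σ is an ℝ-algebra endomorphism of 𝕆[y] with deg_y(σ(y)) = s > 1 and δ a σ-derivation) is a pseudo-degree function: deg(a) = -∞ iff a = 0, deg(ab) = deg(a) + deg(b), and deg(a+b) ≤ max(deg(a), deg(b)). -/

import Mathlib

/-- The octonions, realized via the Cayley–Dickson doubling of the real quaternions. -/
def Octonion : Type := Quaternion ℝ × Quaternion ℝ

noncomputable instance : AddCommGroup Octonion :=
  inferInstanceAs (AddCommGroup (Quaternion ℝ × Quaternion ℝ))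

noncomputable instance : Module ℝ Octonion :=
  inferInstanceAs (Module ℝ (Quaternion ℝ × Quaternion ℝ))

/-- Cayley–Dickson multiplication on pairs of quaternions. -/
noncomputable def Octonion.omul (a b : Quaternion ℝ × Quaternion ℝ) :
    Quaternion ℝ × Quaternion ℝ :=
  (a.1 * b.1 - star b.2 * a.2, b.2 * a.1 + a.2 * star b.1)

noncomputable instance : One Octonion := ⟨((1 : Quaternion ℝ), (0 : Quaternion ℝ))⟩

theorem Octonion.omul_add (a b c : Quaternion ℝ × Quaternion ℝ) :
    Octonion.omul a (b + c) = Octonion.omul a b + Octonion.omul a c := by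
  unfold Octonion.omul
  refine Prod.ext ?_ ?_ <;>
    simp only [Prod.fst_add, Prod.snd_add, mul_add, add_mul, star_add] <;> abel

theorem Octonion.add_omul (a b c : Quaternion ℝ × Quaternion ℝ) :
    Octonion.omul (a + b) c = Octonion.omul a c + Octonion.omul b c := by
  unfold Octonion.omul
  refine Prod.ext ?_ ?_ <;>
    simp only [Prod.fst_add, Prod.snd_add, mul_add, add_mul, star_add] <;> abel

theorem Octonion.zero_omul (a : Quaternion ℝ × Quaternion ℝ) :
    Octonion.omul 0 a = 0 := by
  unfold Octonion.omul; refine Prod.ext ?_ ?_ <;> simp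

theorem Octonion.omul_zero (a : Quaternion ℝ × Quaternion ℝ) :
    Octonion.omul a 0 = 0 := by
  unfold Octonion.omul; refine Prod.ext ?_ ?_ <;> simp

noncomputable instance : NonUnitalNonAssocRing Octonion :=
  { (inferInstanceAs (AddCommGroup Octonion) : AddCommGroup Octonion) with
    mul := Octonion.omul
    left_distrib := fun a b c => Octonion.omul_add a b c
    right_distrib := fun a b c => Octonion.add_omul a b c
    zero_mul := fun a => Octonion.zero_omul a
    mul_zero := fun a => Octonion.omul_zero a }

/-- `R = 𝕆[y]`, the polynomial ring over the octonions, as finitely supported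
sequences of octonion coefficients. -/
noncomputable abbrev OctPoly : Type := ℕ →₀ Octonion

/-- The convolution product on `𝕆[y]`. -/
noncomputable instance : Mul OctPoly :=
  ⟨fun p q => p.sum fun i a => q.sum fun j b => Finsupp.single (i + j) (a * b)⟩

theorem OctPoly.mul_zero (a : OctPoly) : a * (0 : OctPoly) = 0 := by
  show (Finsupp.sum a fun i c => Finsupp.sum 0 fun j b => Finsupp.single (i + j) (c * b)) = 0
  simp

/-- The variable `y` of `𝕆[y]`. -/
noncomputable def Yv : OctPoly := Finsupp.single 1 (1 : Octonion)

/-- The constant polynomial `1` of `𝕆[y]`. -/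
noncomputable def oneR : OctPoly := Finsupp.single 0 (1 : Octonion)

/-- The `y`-degree of a polynomial in `𝕆[y]` (with junk value `0` at `0`). -/
def degy (r : OctPoly) : ℕ := WithBot.unbotD 0 (r.support.max)

/-- The underlying additive group of the Ore extension `S = R[x; σ, δ]`:
finitely supported sequences of coefficients in `R = 𝕆[y]`. -/
noncomputable abbrev OrePoly : Type := ℕ →₀ OctPoly

/-- Left multiplication by `x` in `R[x; σ, δ]`, determined by
`x·(r xʲ) = σ(r) x^(j+1) + δ(r) xʲ`. -/
noncomputable def xmul (σ δ : OctPoly →+ OctPoly) : OrePoly →+ OrePoly :=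
  Finsupp.liftAddHom fun j =>
    (Finsupp.singleAddHom (j + 1)).comp σ + (Finsupp.singleAddHom j).comp δ

/-- The multiplication of the non-associative Ore extension `R[x; σ, δ]`:
`(Σᵢ aᵢ xⁱ)·q = Σᵢ aᵢ·(xⁱ·q)`, where `xⁱ` acts via iterated `xmul` and `aᵢ`
multiplies every coefficient from the left. -/
noncomputable def oreMul (σ δ : OctPoly →+ OctPoly) (p q : OrePoly) : OrePoly :=
  p.sum fun i a => Finsupp.mapRange (a * ·) (OctPoly.mul_zero a) ((xmul σ δ)^[i] q)

/-- The constant `1 = 1·x⁰` of the Ore extension. -/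
noncomputable def oneS : OrePoly := Finsupp.single 0 oneR

/-- The `x`-degree of an element of the Ore extension, valued in `ℤ ∪ {-∞}`. -/
def xdeg (p : OrePoly) : WithBot ℤ := (p.support.max).map (Nat.cast : ℕ → ℤ)

/-- `σ` is a unital `ℝ`-algebra endomorphism of `𝕆[y]`. -/
def IsAlgEndo (σ : OctPoly →+ OctPoly) : Prop :=
  (∀ p q : OctPoly, σ (p * q) = σ p * σ q) ∧ σ oneR = oneR ∧
    (∀ (r : ℝ) (p : OctPoly), σ (r • p) = r • σ p)

/-- `δ` is a `σ`-derivation of `𝕆[y]`. -/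
def IsSigmaDerivation (σ δ : OctPoly →+ OctPoly) : Prop :=
  (∀ p q : OctPoly, δ (p * q) = σ p * δ q + δ p * q) ∧
    (∀ (r : ℝ) (p : OctPoly), δ (r • p) = r • δ p)

/-- An element of `𝕆` is real if it is a real multiple of `1`. -/
def Octonion.IsReal (c : Octonion) : Prop := ∃ r : ℝ, c = r • (1 : Octonion)

/-- Membership in the nucleus of the Ore extension `R[x; σ, δ]`. -/
def OreNucleus (σ δ : OctPoly →+ OctPoly) (a : OrePoly) : Prop :=
  (∀ b c : OrePoly, oreMul σ δ a (oreMul σ δ b c) = oreMul σ δ (oreMul σ δ a b) c) ∧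
  (∀ b c : OrePoly, oreMul σ δ (oreMul σ δ b a) c = oreMul σ δ b (oreMul σ δ a c)) ∧
  (∀ b c : OrePoly, oreMul σ δ (oreMul σ δ b c) a = oreMul σ δ b (oreMul σ δ c a))


/-! ### Auxiliary development -/

namespace OctAux
open Quaternion

def N (c : Octonion) : ℝ := normSq c.1 + normSq c.2

lemma mul_def (a b : Octonion) : a * b = Octonion.omul a b := rfl

lemma N_mul (a b : Octonion) : N (a * b) = N a * N b := by
  show N (Octonion.omul a b) = _
  unfold N Octonion.omul
  simp only [Quaternion.normSq_def', Quaternion.re_mul, Quaternion.imI_mul, Quaternion.imJ_mul,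
    Quaternion.imK_mul, Quaternion.re_sub, Quaternion.imI_sub, Quaternion.imJ_sub,
    Quaternion.imK_sub, Quaternion.re_add, Quaternion.imI_add, Quaternion.imJ_add,
    Quaternion.imK_add, Quaternion.re_star, Quaternion.imI_star, Quaternion.imJ_star,
    Quaternion.imK_star]
  ring

lemma N_eq_zero (a : Octonion) : N a = 0 ↔ a = 0 := by
  unfold N
  constructor
  · intro h
    have h1 : normSq a.1 = 0 ∧ normSq a.2 = 0 := by
      constructor <;> nlinarith [Quaternion.normSq_nonneg (a := a.1), Quaternion.normSq_nonneg (a := a.2)]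
    have : a.1 = 0 := by simpa [Quaternion.normSq_eq_zero] using h1.1
    have : a.2 = 0 := by simpa [Quaternion.normSq_eq_zero] using h1.2
    exact Prod.ext ‹a.1 = 0› ‹a.2 = 0›
  · rintro rfl; show normSq (0:Quaternion ℝ) + normSq (0:Quaternion ℝ) = 0; simp

lemma mul_ne_zero {a b : Octonion} (ha : a ≠ 0) (hb : b ≠ 0) : a * b ≠ 0 := by
  intro h
  have := N_mul a b
  rw [h, (N_eq_zero 0).mpr rfl] at this
  rcases mul_eq_zero.mp this.symm with h' | h'
  · exact ha ((N_eq_zero a).mp h')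
  · exact hb ((N_eq_zero b).mp h')

lemma one_ne_zero' : (1 : Octonion) ≠ 0 := by
  intro h
  exact one_ne_zero (α := Quaternion ℝ) (congrArg Prod.fst h)

lemma mul_one' (a : Octonion) : a * 1 = a := by
  show Octonion.omul a (1, 0) = a
  unfold Octonion.omul; simp; rfl

def oconj (c : Octonion) : Octonion := (star c.1, -c.2)

lemma mul_oconj (c : Octonion) : c * oconj c = (N c) • 1 := by
  show Octonion.omul c (star c.1, -c.2) = _
  unfold Octonion.omul N
  refine Prod.ext ?_ ?_
  · show c.1 * star c.1 - star (-c.2) * c.2 = (normSq c.1 + normSq c.2) • (1:Quaternion ℝ)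
    rw [star_neg, neg_mul, sub_neg_eq_add]
    ext <;>
      simp [Quaternion.re_mul, Quaternion.imI_mul, Quaternion.imJ_mul, Quaternion.imK_mul,
        Quaternion.normSq_def'] <;> ring
  · show -c.2 * c.1 + c.2 * star (star c.1) = (normSq c.1 + normSq c.2) • (0:Quaternion ℝ)
    simp [neg_mul]

lemma quad (c : Octonion) : c * c = (2 * c.1.re) • c - (N c) • 1 := by
  show Octonion.omul c c = _
  unfold Octonion.omul N
  refine Prod.ext ?_ ?_
  · show c.1 * c.1 - star c.2 * c.2 = (2*c.1.re) • c.1 - (normSq c.1 + normSq c.2) • (1:Quaternion ℝ)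
    ext <;> simp [Quaternion.re_mul, Quaternion.imI_mul, Quaternion.imJ_mul, Quaternion.imK_mul,
      Quaternion.normSq_def'] <;> ring
  · show c.2 * c.1 + c.2 * star c.1 = (2*c.1.re) • c.2 - (normSq c.1 + normSq c.2) • (0:Quaternion ℝ)
    ext <;> simp [Quaternion.re_mul, Quaternion.imI_mul, Quaternion.imJ_mul, Quaternion.imK_mul] <;> ring

end OctAux

namespace FsAux
variable {M : Type*} [AddCommGroup M]

lemma max_eq {p : ℕ →₀ M} {d : ℕ} (h1 : p d ≠ 0) (h2 : ∀ m, d < m → p m = 0) :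
    p.support.max = (d : WithBot ℕ) := by
  apply le_antisymm
  · apply Finset.max_le
    intro b hb
    by_contra hlt
    push_neg at hlt
    have hdb : d < b := Nat.cast_lt.mp hlt
    exact (Finsupp.mem_support_iff.mp hb) (h2 b hdb)
  · exact Finset.le_max (Finsupp.mem_support_iff.mpr h1)

lemma exists_deg {p : ℕ →₀ M} (hp : p ≠ 0) :
    ∃ d : ℕ, p.support.max = (d : WithBot ℕ) ∧ p d ≠ 0 ∧ ∀ m, d < m → p m = 0 := by
  have hne : p.support.Nonempty := by
    rw [Finsupp.support_nonempty_iff]; exact hp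
  obtain ⟨d, hd⟩ := Finset.max_of_nonempty hne
  refine ⟨d, hd, ?_, ?_⟩
  · exact Finsupp.mem_support_iff.mp (Finset.mem_of_max hd)
  · intro m hm
    by_contra h
    have := Finset.le_max (Finsupp.mem_support_iff.mpr h)
    rw [hd] at this
    exact absurd (Nat.cast_le.mp this) (not_le.mpr hm)

lemma of_max_eq {p : ℕ →₀ M} {d : ℕ} (h : p.support.max = (d : WithBot ℕ)) :
    p d ≠ 0 ∧ ∀ m, d < m → p m = 0 := by
  have hp : p ≠ 0 := by
    intro h0
    rw [h0] at h
    simp at h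
  obtain ⟨d', hd', h1, h2⟩ := exists_deg hp
  have : d' = d := by
    rw [hd'] at h
    exact_mod_cast h
  subst this
  exact ⟨h1, h2⟩

lemma const_ne {p : ℕ →₀ M} (h2 : ∀ m, 0 < m → p m = 0) (hp : p ≠ 0) : p 0 ≠ 0 := by
  intro h0
  apply hp
  ext n
  cases n with
  | zero => exact h0
  | succ k => exact h2 _ (Nat.succ_pos k)

end FsAux

namespace OPAux

lemma mul_def' (p q : OctPoly) :
    p * q = p.sum fun i a => q.sum fun j b => Finsupp.single (i + j) (a * b) := rfl

lemma mul_apply (p q : OctPoly) (n : ℕ) :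
    (p * q) n = ∑ i ∈ p.support, ∑ j ∈ q.support,
      (if i + j = n then p i * q j else 0) := by
  rw [mul_def']
  simp only [Finsupp.sum, Finsupp.finset_sum_apply, Finsupp.single_apply]

lemma zero_mul' (q : OctPoly) : (0 : OctPoly) * q = 0 := by
  rw [mul_def']; simp [Finsupp.sum]

lemma single_mul_single (i j : ℕ) (a b : Octonion) :
    (Finsupp.single i a : OctPoly) * Finsupp.single j b = Finsupp.single (i+j) (a*b) := by
  rw [mul_def']
  rw [Finsupp.sum_single_index, Finsupp.sum_single_index]
  · simp
  · rw [Finsupp.sum_single_index] <;> simp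

lemma mul_apply_top {p q : OctPoly} {dp dq : ℕ}
    (hp : ∀ m, dp < m → p m = 0) (hq : ∀ m, dq < m → q m = 0) :
    (p * q) (dp + dq) = p dp * q dq := by
  rw [mul_apply]
  rw [Finset.sum_eq_single dp]
  · rw [Finset.sum_eq_single dq]
    · simp
    · intro j hj hne
      have hjle : j ≤ dq := by
        by_contra h; exact (Finsupp.mem_support_iff.mp hj) (hq j (lt_of_not_ge h))
      have : dp + j ≠ dp + dq := fun h => hne (by omega)
      simp [this, hne]
    · intro h
      have : q dq = 0 := Finsupp.notMem_support_iff.mp h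
      simp [this]
  · intro i hi hne
    have hile : i ≤ dp := by
      by_contra h; exact (Finsupp.mem_support_iff.mp hi) (hp i (lt_of_not_ge h))
    have hilt : i < dp := lt_of_le_of_ne hile hne
    apply Finset.sum_eq_zero
    intro j hj
    have hjle : j ≤ dq := by
      by_contra h; exact (Finsupp.mem_support_iff.mp hj) (hq j (lt_of_not_ge h))
    have : i + j ≠ dp + dq := by omega
    simp [this]
  · intro h
    have : p dp = 0 := Finsupp.notMem_support_iff.mp h
    simp [this]

lemma mul_apply_gt {p q : OctPoly} {dp dq : ℕ}
    (hp : ∀ m, dp < m → p m = 0) (hq : ∀ m, dq < m → q m = 0) :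
    ∀ n, dp + dq < n → (p * q) n = 0 := by
  intro n hn
  rw [mul_apply]
  apply Finset.sum_eq_zero
  intro i hi
  apply Finset.sum_eq_zero
  intro j hj
  have hile : i ≤ dp := by
    by_contra h; exact (Finsupp.mem_support_iff.mp hi) (hp i (lt_of_not_ge h))
  have hjle : j ≤ dq := by
    by_contra h; exact (Finsupp.mem_support_iff.mp hj) (hq j (lt_of_not_ge h))
  have : i + j ≠ n := by omega
  simp [this]

/-- no zero divisors in `𝕆[y]` -/
lemma mul_ne_zero' {p q : OctPoly} (hp : p ≠ 0) (hq : q ≠ 0) : p * q ≠ 0 := by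
  obtain ⟨dp, _, hp1, hp2⟩ := FsAux.exists_deg hp
  obtain ⟨dq, _, hq1, hq2⟩ := FsAux.exists_deg hq
  intro h
  have := mul_apply_top hp2 hq2
  rw [h] at this
  exact OctAux.mul_ne_zero hp1 hq1 this.symm

end OPAux

section SigmaAux

variable {σ : OctPoly →+ OctPoly} (hσ : IsAlgEndo σ)
include hσ

lemma sigma_const_ne {c : Octonion} (hc : c ≠ 0) : σ (Finsupp.single 0 c) ≠ 0 := by
  intro h
  have key : Finsupp.single 0 c * Finsupp.single 0 (OctAux.oconj c)
      = (OctAux.N c) • oneR := by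
    rw [OPAux.single_mul_single, OctAux.mul_oconj]
    rw [show oneR = Finsupp.single 0 (1:Octonion) from rfl, Finsupp.smul_single]
  have h2 : (OctAux.N c) • oneR = (0 : OctPoly) := by
    calc (OctAux.N c) • oneR = σ ((OctAux.N c) • oneR) := by rw [hσ.2.2, hσ.2.1]
    _ = σ (Finsupp.single 0 c * Finsupp.single 0 (OctAux.oconj c)) := by rw [key]
    _ = σ (Finsupp.single 0 c) * σ (Finsupp.single 0 (OctAux.oconj c)) := hσ.1 _ _
    _ = 0 := by rw [h, OPAux.zero_mul']
  have h3 : ((OctAux.N c) • oneR) 0 = (0 : Octonion) := by rw [h2]; rfl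
  rw [show oneR = Finsupp.single 0 (1:Octonion) from rfl, Finsupp.smul_single,
    Finsupp.single_eq_same] at h3
  have hN : OctAux.N c ≠ 0 := fun h' => hc ((OctAux.N_eq_zero c).mp h')
  have : (1 : Octonion) = 0 := by
    have := smul_eq_zero.mp h3
    tauto
  exact OctAux.one_ne_zero' this

lemma sigma_const_bound (c : Octonion) :
    ∀ m, 0 < m → (σ (Finsupp.single 0 c)) m = 0 := by
  set p := σ (Finsupp.single 0 c) with hpdef
  by_cases hp : p = 0
  · intro m _; rw [hp]; rfl
  obtain ⟨d, _, h1, h2⟩ := FsAux.exists_deg hp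
  rcases Nat.eq_zero_or_pos d with hd | hd
  · subst hd
    intro m hm; exact h2 m hm
  · exfalso
    have key : Finsupp.single 0 c * Finsupp.single 0 c
        = (2 * c.1.re) • Finsupp.single 0 c - (OctAux.N c) • oneR := by
      rw [OPAux.single_mul_single, OctAux.quad]
      rw [show oneR = Finsupp.single 0 (1:Octonion) from rfl, Finsupp.smul_single,
        Finsupp.smul_single, Finsupp.single_sub]
    have hq : p * p = (2 * c.1.re) • p - (OctAux.N c) • oneR := by
      rw [hpdef, ← hσ.1, key, map_sub, hσ.2.2, hσ.2.2, hσ.2.1]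
    have htop : (p * p) (d + d) = p d * p d := OPAux.mul_apply_top h2 h2
    have hrhs : ((2 * c.1.re) • p - (OctAux.N c) • oneR) (d + d) = 0 := by
      rw [Finsupp.sub_apply, Finsupp.smul_apply, Finsupp.smul_apply]
      rw [h2 (d+d) (by omega)]
      rw [show oneR = Finsupp.single 0 (1:Octonion) from rfl,
        Finsupp.single_apply, if_neg (by omega)]
      simp
    rw [hq, hrhs] at htop
    exact OctAux.mul_ne_zero h1 h1 htop.symm

/-- iterated powers of `y` -/
noncomputable def yp : ℕ → OctPoly
  | 0 => oneR
  | (n+1) => yp n * Yv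

omit hσ in
lemma yp_eq : ∀ n, yp n = Finsupp.single n (1 : Octonion) := by
  intro n
  induction n with
  | zero => rfl
  | succ k ih =>
    show yp k * Yv = _
    rw [ih, Yv, OPAux.single_mul_single, OctAux.mul_one']

variable {s : ℕ} (hs : (σ Yv).support.max = (s : WithBot ℕ)) (hs1 : 1 < s)
include hs

lemma sigma_yp (n : ℕ) :
    (σ (yp n)) (n * s) ≠ 0 ∧ ∀ m, n * s < m → (σ (yp n)) m = 0 := by
  induction n with
  | zero =>
    have h0 : σ (yp 0) = oneR := hσ.2.1
    rw [h0]
    constructor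
    · rw [show oneR = Finsupp.single 0 (1:Octonion) from rfl]
      simp [OctAux.one_ne_zero']
    · intro m hm
      rw [show oneR = Finsupp.single 0 (1:Octonion) from rfl, Finsupp.single_apply,
        if_neg (by omega)]
  | succ k ih =>
    have hstep : σ (yp (k+1)) = σ (yp k) * σ Yv := by
      show σ (yp k * Yv) = _
      rw [hσ.1]
    obtain ⟨hY1, hY2⟩ := FsAux.of_max_eq hs
    have hmul : (k+1) * s = k * s + s := by ring
    constructor
    · rw [hstep, hmul, OPAux.mul_apply_top ih.2 hY2]
      exact OctAux.mul_ne_zero ih.1 hY1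
    · intro m hm
      rw [hstep]
      exact OPAux.mul_apply_gt ih.2 hY2 m (by omega)

lemma sigma_single {n : ℕ} {c : Octonion} (hc : c ≠ 0) :
    (σ (Finsupp.single n c)) (n * s) ≠ 0 ∧
      ∀ m, n * s < m → (σ (Finsupp.single n c)) m = 0 := by
  have hdec : (Finsupp.single n c : OctPoly) = Finsupp.single 0 c * yp n := by
    rw [yp_eq, OPAux.single_mul_single, OctAux.mul_one', zero_add]
  have hσs : σ (Finsupp.single n c) = σ (Finsupp.single 0 c) * σ (yp n) := by
    rw [hdec, hσ.1]
  have hc0 : (σ (Finsupp.single 0 c)) 0 ≠ 0 :=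
    FsAux.const_ne (sigma_const_bound hσ c) (sigma_const_ne hσ hc)
  have hcb := sigma_const_bound hσ c
  obtain ⟨hy1, hy2⟩ := sigma_yp hσ hs n
  constructor
  · rw [hσs, show n * s = 0 + n * s by omega, OPAux.mul_apply_top hcb hy2]
    exact OctAux.mul_ne_zero hc0 hy1
  · intro m hm
    rw [hσs]
    exact OPAux.mul_apply_gt hcb hy2 m (by omega)

include hs1

lemma sigma_ne_zero {r : OctPoly} (hr : r ≠ 0) : σ r ≠ 0 := by
  obtain ⟨d, _, h1, h2⟩ := FsAux.exists_deg hr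
  have hrsum : r = ∑ i ∈ r.support, Finsupp.single i (r i) := by
    exact (Finsupp.sum_single r).symm
  have hσr : σ r = ∑ i ∈ r.support, σ (Finsupp.single i (r i)) := by
    conv_lhs => rw [hrsum]
    exact map_sum σ _ _
  intro h0
  have hcoef : (σ r) (d * s) = 0 := by rw [h0]; rfl
  rw [hσr, Finsupp.finset_sum_apply] at hcoef
  rw [Finset.sum_eq_single d] at hcoef
  · exact (sigma_single hσ hs h1).1 hcoef
  · intro i hi hne
    have hc : r i ≠ 0 := Finsupp.mem_support_iff.mp hi
    have hile : i ≤ d := by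
      by_contra h; exact hc (h2 i (lt_of_not_ge h))
    have : i * s < d * s := by
      have hid : i < d := lt_of_le_of_ne hile hne
      exact Nat.mul_lt_mul_of_pos_right hid (by omega)
    exact (sigma_single hσ hs hc).2 _ this
  · intro h
    exact absurd (Finsupp.mem_support_iff.mpr h1) h

lemma sigma_iter_ne_zero (k : ℕ) {r : OctPoly} (hr : r ≠ 0) : σ^[k] r ≠ 0 := by
  induction k with
  | zero => exact hr
  | succ m ih =>
    rw [Function.iterate_succ_apply']
    exact sigma_ne_zero hσ hs hs1 ih

end SigmaAux

section OreAux

variable (σ δ : OctPoly →+ OctPoly)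

lemma xmul_sum_def (p : OrePoly) :
    xmul σ δ p = p.sum fun j r =>
      Finsupp.single (j+1) (σ r) + Finsupp.single j (δ r) := by
  rw [xmul, Finsupp.liftAddHom_apply]
  rfl

lemma xmul_apply_succ (p : OrePoly) (n : ℕ) :
    (xmul σ δ p) (n+1) = σ (p n) + δ (p (n+1)) := by
  rw [xmul_sum_def]
  rw [Finsupp.sum, Finsupp.finset_sum_apply]
  simp only [Finsupp.add_apply, Finsupp.single_apply]
  rw [Finset.sum_add_distrib]
  congr 1
  · rw [show (∑ j ∈ p.support, if j + 1 = n + 1 then σ (p j) else 0)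
        = ∑ j ∈ p.support, if j = n then σ (p j) else 0 by
      refine Finset.sum_congr rfl fun j _ => ?_
      congr 1
      simp]
    rw [Finset.sum_ite_eq' p.support n (fun j => σ (p j))]
    by_cases h : n ∈ p.support
    · rw [if_pos h]
    · rw [if_neg h, Finsupp.notMem_support_iff.mp h, map_zero]
  · rw [Finset.sum_ite_eq' p.support (n+1) (fun j => δ (p j))]
    by_cases h : (n+1) ∈ p.support
    · rw [if_pos h]
    · rw [if_neg h, Finsupp.notMem_support_iff.mp h, map_zero]

lemma xmul_apply_zero (p : OrePoly) : (xmul σ δ p) 0 = δ (p 0) := by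
  rw [xmul_sum_def]
  rw [Finsupp.sum, Finsupp.finset_sum_apply]
  simp only [Finsupp.add_apply, Finsupp.single_apply]
  rw [Finset.sum_add_distrib]
  rw [show (∑ j ∈ p.support, if j + 1 = 0 then σ (p j) else 0) = 0 by
    apply Finset.sum_eq_zero; intro j _; simp]
  rw [zero_add]
  rw [Finset.sum_ite_eq' p.support 0 (fun j => δ (p j))]
  by_cases h : 0 ∈ p.support
  · rw [if_pos h]
  · rw [if_neg h, Finsupp.notMem_support_iff.mp h, map_zero]

lemma xmul_iter_bound (k : ℕ) (q : OrePoly) (n : ℕ) (hq : ∀ m, n < m → q m = 0) :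
    (∀ m, n + k < m → ((xmul σ δ)^[k] q) m = 0) ∧
      ((xmul σ δ)^[k] q) (n + k) = σ^[k] (q n) := by
  induction k with
  | zero => exact ⟨by simpa using hq, rfl⟩
  | succ j ih =>
    obtain ⟨ihb, iht⟩ := ih
    set p := (xmul σ δ)^[j] q with hp
    have hstep : (xmul σ δ)^[j+1] q = xmul σ δ p := by
      rw [Function.iterate_succ_apply']
    constructor
    · intro m hm
      rw [hstep]
      obtain ⟨m', rfl⟩ : ∃ m', m = m' + 1 := ⟨m - 1, by omega⟩
      rw [xmul_apply_succ]
      rw [ihb m' (by omega), ihb (m'+1) (by omega), map_zero, map_zero, add_zero]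
    · rw [hstep, show n + (j+1) = (n + j) + 1 by omega, xmul_apply_succ]
      rw [iht, ihb (n+j+1) (by omega), map_zero, add_zero]
      exact (Function.iterate_succ_apply' (⇑σ) j (q n)).symm

lemma oreMul_apply (p q : OrePoly) (n : ℕ) :
    (oreMul σ δ p q) n = ∑ i ∈ p.support, p i * (((xmul σ δ)^[i] q) n) := by
  rw [oreMul, Finsupp.sum, Finsupp.finset_sum_apply]
  refine Finset.sum_congr rfl fun i _ => ?_
  rw [Finsupp.mapRange_apply]

lemma oreMul_zero_left (q : OrePoly) : oreMul σ δ 0 q = 0 := by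
  rw [oreMul]; simp [Finsupp.sum]

lemma oreMul_zero_right (p : OrePoly) : oreMul σ δ p 0 = 0 := by
  rw [oreMul]
  have hfix : ∀ i, ((xmul σ δ)^[i] (0 : OrePoly)) = 0 := fun i =>
    Function.iterate_fixed (map_zero _) i
  rw [Finsupp.sum]
  apply Finset.sum_eq_zero
  intro i _
  rw [hfix i, Finsupp.mapRange_zero]

end OreAux


section MainAux

variable {σ δ : OctPoly →+ OctPoly} (hσ : IsAlgEndo σ)
variable {s : ℕ} (hs : (σ Yv).support.max = (s : WithBot ℕ)) (hs1 : 1 < s)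
include hσ hs hs1

lemma oreMul_top {p q : OrePoly} {dp dq : ℕ}
    (hp1 : p dp ≠ 0) (hp2 : ∀ m, dp < m → p m = 0)
    (hq1 : q dq ≠ 0) (hq2 : ∀ m, dq < m → q m = 0) :
    (oreMul σ δ p q).support.max = ((dp + dq : ℕ) : WithBot ℕ) := by
  apply FsAux.max_eq
  · rw [oreMul_apply]
    rw [Finset.sum_eq_single dp]
    · have := (xmul_iter_bound σ δ dp q dq hq2).2
      rw [show dp + dq = dq + dp by omega, this]
      exact OPAux.mul_ne_zero' hp1 (sigma_iter_ne_zero hσ hs hs1 dp hq1)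
    · intro i hi hne
      have hile : i ≤ dp := by
        by_contra h
        exact (Finsupp.mem_support_iff.mp hi) (hp2 i (lt_of_not_ge h))
      have hilt : i < dp := lt_of_le_of_ne hile hne
      rw [(xmul_iter_bound σ δ i q dq hq2).1 (dp + dq) (by omega)]
      exact OctPoly.mul_zero (p i)
    · intro h
      exact absurd (Finsupp.mem_support_iff.mpr hp1) h
  · intro m hm
    rw [oreMul_apply]
    apply Finset.sum_eq_zero
    intro i hi
    have hile : i ≤ dp := by
      by_contra h
      exact (Finsupp.mem_support_iff.mp hi) (hp2 i (lt_of_not_ge h))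
    rw [(xmul_iter_bound σ δ i q dq hq2).1 m (by omega)]
    exact OctPoly.mul_zero (p i)

end MainAux

lemma xdeg_zero : xdeg 0 = ⊥ := by
  rw [xdeg]
  simp

lemma xdeg_coe {a : OrePoly} {d : ℕ} (h : a.support.max = (d : WithBot ℕ)) :
    xdeg a = ((d : ℤ) : WithBot ℤ) := by
  rw [xdeg, h]; rfl

lemma map_cast_mono {u v : WithBot ℕ} (h : u ≤ v) :
    u.map (Nat.cast : ℕ → ℤ) ≤ v.map (Nat.cast : ℕ → ℤ) := by
  cases u with
  | bot => exact bot_le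
  | coe x =>
    cases v with
    | bot => exact absurd h (by simp)
    | coe y =>
      have hxy : x ≤ y := by exact_mod_cast h
      show ((x:ℤ) : WithBot ℤ) ≤ ((y:ℤ) : WithBot ℤ)
      exact_mod_cast hxy

/-- The degree function with respect to `x` on the non-associative Ore extension
`S = 𝕆[y][x; σ, δ]` (with `σ` an `ℝ`-algebra endomorphism of `𝕆[y]` satisfying
`deg_y (σ y) = s > 1` and `δ` a `σ`-derivation) is a pseudo-degree function:
`deg a = -∞` iff `a = 0`, `deg (a·b) = deg a + deg b`, and
`deg (a + b) ≤ max (deg a) (deg b)`. -/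
theorem xdeg_isPseudoDegree (σ δ : OctPoly →+ OctPoly)
    (hσ : IsAlgEndo σ) (s : ℕ) (hs : (σ Yv).support.max = (s : WithBot ℕ)) (hs1 : 1 < s)
    (hδ : IsSigmaDerivation σ δ) :
    (∀ a : OrePoly, xdeg a = ⊥ ↔ a = 0) ∧
    (∀ a b : OrePoly, xdeg (oreMul σ δ a b) = xdeg a + xdeg b) ∧
    (∀ a b : OrePoly, xdeg (a + b) ≤ max (xdeg a) (xdeg b)) := by
  refine ⟨?_, ?_, ?_⟩
  · intro a
    constructor
    · intro h
      by_contra ha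
      obtain ⟨d, hd, _, _⟩ := FsAux.exists_deg ha
      rw [xdeg_coe hd] at h
      exact absurd h (by simp)
    · rintro rfl; exact xdeg_zero
  · intro a b
    rcases eq_or_ne a 0 with rfl | ha
    · rw [oreMul_zero_left, xdeg_zero, WithBot.bot_add]
    rcases eq_or_ne b 0 with rfl | hb
    · rw [oreMul_zero_right, xdeg_zero, WithBot.add_bot]
    obtain ⟨dp, hdp, hp1, hp2⟩ := FsAux.exists_deg ha
    obtain ⟨dq, hdq, hq1, hq2⟩ := FsAux.exists_deg hb
    rw [xdeg_coe hdp, xdeg_coe hdq,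
      xdeg_coe (oreMul_top hσ hs hs1 hp1 hp2 hq1 hq2)]
    rw [← WithBot.coe_add]
    push_cast
    rfl
  · intro a b
    have h1 : (a+b).support.max ≤ max a.support.max b.support.max := by
      apply Finset.max_le
      intro n hn
      rcases Finset.mem_union.mp (Finsupp.support_add hn) with h | h
      · exact le_trans (Finset.le_max h) (le_max_left _ _)
      · exact le_trans (Finset.le_max h) (le_max_right _ _)
    calc xdeg (a+b) ≤ (max a.support.max b.support.max).map (Nat.cast : ℕ → ℤ) :=
          map_cast_mono h1
      _ ≤ max (xdeg a) (xdeg b) := by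
          rcases le_total a.support.max b.support.max with h | h
          · rw [max_eq_right h]; exact le_max_right _ _
          · rw [max_eq_left h]; exact le_max_left _ _
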